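/- Let H and B be symmetric d×d matrices with ‖H − B‖ ≤ v₀·ε_B, where v₀ ∈ (0,1] and ε_H > ε_B > 0, and suppose λ_min(H) ≤ −ε_H. Let g ∈ ℝ^d, Δ > 0, and let m(s) = h₀ + ⟨g,s⟩ + ½⟨s,Bs⟩. If s ∈ ℝ^d satisfies ⟨g,s⟩ ≤ 0, ⟨s, H s⟩ ≤ v₀·λ_min(H)·Δ², and ‖s‖ = Δ, then m(0) − m(s) ≥ ½ v₀ (ε_H − ε_B) Δ². -/
import Mathlib


open RealInnerProductSpace

/-- The smallest eigenvalue of a (self-adjoint) operator on `ℝ^d`, expressed as the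
infimum of the Rayleigh quotient over the unit sphere. -/
noncomputable def lambdaMin {d : ℕ}
    (H : EuclideanSpace ℝ (Fin d) →L[ℝ] EuclideanSpace ℝ (Fin d)) : ℝ :=
  sInf ((fun s => ⟪s, H s⟫) '' {s : EuclideanSpace ℝ (Fin d) | ‖s‖ = 1})

/-- model decrease along a sufficient negative-curvature direction. -/
theorem stmt_2 {d : ℕ}
    (H B : EuclideanSpace ℝ (Fin d) →L[ℝ] EuclideanSpace ℝ (Fin d))
    (hHsym : IsSelfAdjoint H) (hBsym : IsSelfAdjoint B)
    (v₀ εB εH : ℝ) (hv₀ : 0 < v₀) (hv₀' : v₀ ≤ 1) (hεB : 0 < εB) (hεH : εB < εH)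
    (hHB : ‖H - B‖ ≤ v₀ * εB) (hlam : lambdaMin H ≤ -εH)
    (g : EuclideanSpace ℝ (Fin d)) (Δ h₀ : ℝ) (hΔ : 0 < Δ)
    (m : EuclideanSpace ℝ (Fin d) → ℝ)
    (hm : ∀ u, m u = h₀ + ⟪g, u⟫ + (1 / 2) * ⟪u, B u⟫)
    (s : EuclideanSpace ℝ (Fin d))
    (hgs : ⟪g, s⟫ ≤ 0) (hcurv : ⟪s, H s⟫ ≤ v₀ * lambdaMin H * Δ ^ 2)
    (hnorm : ‖s‖ = Δ) :
    m 0 - m s ≥ (1 / 2) * v₀ * (εH - εB) * Δ ^ 2 := by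
  have hBs : ⟪s, B s⟫ = ⟪s, H s⟫ - ⟪s, (H - B) s⟫ := by
    simp [ContinuousLinearMap.sub_apply, inner_sub_right]
  have hbd : |⟪s, (H - B) s⟫| ≤ v₀ * εB * Δ ^ 2 := by
    calc |⟪s, (H - B) s⟫| ≤ ‖s‖ * ‖(H - B) s‖ := abs_real_inner_le_norm _ _
      _ ≤ ‖s‖ * (‖H - B‖ * ‖s‖) := by
          gcongr; exact (H - B).le_opNorm s
      _ ≤ Δ * (v₀ * εB * Δ) := by
          rw [hnorm]; gcongr
      _ = v₀ * εB * Δ ^ 2 := by ring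
  have hcurv' : ⟪s, H s⟫ ≤ -(v₀ * εH * Δ ^ 2) := by
    have h1 : v₀ * lambdaMin H * Δ ^ 2 ≤ v₀ * (-εH) * Δ ^ 2 :=
      mul_le_mul_of_nonneg_right (mul_le_mul_of_nonneg_left hlam hv₀.le) (sq_nonneg Δ)
    nlinarith
  have hB' : ⟪s, B s⟫ ≤ -(v₀ * (εH - εB) * Δ ^ 2) := by
    have := abs_le.mp hbd
    rw [hBs]; nlinarith
  have h0 : m 0 = h₀ := by simp [hm]
  rw [h0, hm s]
  nlinarith
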